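/- Let G = (V,E) be a graph and define G' with vertex set V' = {v_1, v_2, v_3 : v ∈ V} and edge set E' = {u_1 v_2, u_1 v_3, u_2 v_3 : u = v or uv ∈ E}. Then G' is 3-colorable (the sets {v_1 : v ∈ V}, {v_2 : v ∈ V}, {v_3 : v ∈ V} are independent sets), and for any valid edge-bicoloring B' of G' (every triangle has 0, 2 or 3 edges colored 1) that colors all edges of the form u_i u_j (same underlying vertex) with 0, the six edges u_i v_j associated with a single edge uv of G all receive the same color. -/

import Mathlib

/-- An edge-bicoloring `B` (where `true` means color 1) is valid for `G` if no
triangle of `G` contains exactly one edge colored 1 (every triangle has 0, 2 or 3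
edges colored 1). -/
def ValidBicoloring {V : Type*} (G : SimpleGraph V) (B : Sym2 V → Bool) : Prop :=
  ∀ x y z : V, G.Adj x y → G.Adj y z → G.Adj x z →
    ((if B s(x, y) then 1 else 0) + (if B s(y, z) then 1 else 0) +
      (if B s(x, z) then 1 else 0) : ℕ) ≠ 1

/-- The graph `G'` on `V × {1,2,3}` with `(u,i)` adjacent to `(v,j)` iff `i ≠ j` and
(`u = v` or `uv ∈ E(G)`); this realizes the edge set
`{u₁v₂, u₁v₃, u₂v₃ : u = v or uv ∈ E}`. -/
def tripleGraph {V : Type*} (G : SimpleGraph V) : SimpleGraph (V × Fin 3) where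
  Adj a b := a.2 ≠ b.2 ∧ (a.1 = b.1 ∨ G.Adj a.1 b.1)
  symm := by
    constructor
    rintro ⟨u, i⟩ ⟨v, j⟩ ⟨hij, h⟩
    exact ⟨hij.symm, by cases h with
      | inl h => exact Or.inl h.symm
      | inr h => exact Or.inr h.symm⟩
  loopless := by constructor; rintro ⟨u, i⟩ ⟨h, -⟩; exact h rfl

/-- The three copies of `V` are independent sets of `tripleGraph G`
(so it is 3-colorable), and every valid edge-bicoloring of `tripleGraph G` that
colors all edges between copies of a single vertex with 0 assigns the same color to
the six edges associated with a single edge `uv` of `G`. -/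
theorem stmt19 {V : Type*} (G : SimpleGraph V) :
    (∀ i : Fin 3, ∀ u v : V, ¬ (tripleGraph G).Adj (u, i) (v, i)) ∧
    (∀ B : Sym2 (V × Fin 3) → Bool,
      ValidBicoloring (tripleGraph G) B →
      (∀ v : V, ∀ i j : Fin 3, i ≠ j → B s((v, i), (v, j)) = false) →
      ∀ u v : V, G.Adj u v → ∀ i j i' j' : Fin 3, i ≠ j → i' ≠ j' →
        B s((u, i), (v, j)) = B s((u, i'), (v, j'))) := by
  constructor
  · rintro i u v ⟨hii, -⟩; exact hii rfl
  · intro B hval hV u v huv i j i' j' hij hij'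
    have h1 : ∀ (a b c : Fin 3), a ≠ c → b ≠ c →
        B s((u, a), (v, c)) = B s((u, b), (v, c)) := by
      intro a b c hac hbc
      by_cases hab : a = b
      · rw [hab]
      · have hval' := hval (u, a) (v, c) (u, b)
          ⟨hac, Or.inr huv⟩ ⟨fun h => hbc h.symm, Or.inr huv.symm⟩ ⟨hab, Or.inl rfl⟩
        have h0 : B s((u, a), (u, b)) = false := hV u a b hab
        rw [h0] at hval'
        rw [show s((v, c), (u, b)) = s((u, b), (v, c)) from Sym2.eq_swap] at hval'
        cases hb1 : B s((u, a), (v, c)) <;> cases hb2 : B s((u, b), (v, c)) <;>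
          simp_all
    have h2 : ∀ (a b c : Fin 3), a ≠ b → a ≠ c →
        B s((u, a), (v, b)) = B s((u, a), (v, c)) := by
      intro a b c hab hac
      by_cases hbc : b = c
      · rw [hbc]
      · have hval' := hval (u, a) (v, b) (v, c)
          ⟨hab, Or.inr huv⟩ ⟨hbc, Or.inl rfl⟩ ⟨hac, Or.inr huv⟩
        have h0 : B s((v, b), (v, c)) = false := hV v b c hbc
        rw [h0] at hval'
        cases hb1 : B s((u, a), (v, b)) <;> cases hb2 : B s((u, a), (v, c)) <;>
          simp_all
    by_cases h : i' ≠ j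
    · calc B s((u, i), (v, j)) = B s((u, i'), (v, j)) := h1 i i' j hij h
        _ = B s((u, i'), (v, j')) := h2 i' j j' h hij'
    · push_neg at h
      by_cases h' : j' = i
      · -- i' = j, j' = i : swap case
        obtain ⟨k, hki, hkj⟩ := (by decide :
          ∀ a b : Fin 3, a ≠ b → ∃ k, k ≠ a ∧ k ≠ b) i j hij
        rw [h, h']
        calc B s((u, i), (v, j)) = B s((u, k), (v, j)) := h1 i k j hij hkj
          _ = B s((u, k), (v, i)) := h2 k j i hkj hki
          _ = B s((u, j), (v, i)) := h1 k j i hki (Ne.symm hij)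
      · calc B s((u, i), (v, j)) = B s((u, i), (v, j')) :=
              h2 i j j' hij (fun a => h' a.symm)
          _ = B s((u, i'), (v, j')) := h1 i i' j' (fun a => h' a.symm) hij'
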